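/- Let I ⊆ ℝ be an open interval containing 0, let α > 0, and let φ : I \ {0} → ℝ be a C¹ function such that lim_{t→0} φ(t) = 0 and lim_{t→0} (φ'(t) + α·φ(t)/t) = 0. Then lim_{t→0} φ(t)/t = 0 and lim_{t→0} φ'(t) = 0; consequently, the function obtained by extending φ to I with φ(0) = 0 is of class C¹ on all of I and its derivative at 0 equals 0. -/

import Mathlib

open Set Filter Topology

lemma rpow_tendsto_zero {α : ℝ} (hα : 0 < α) :
    Tendsto (fun s : ℝ => s ^ α) (𝓝[>] (0:ℝ)) (𝓝 0) := by
  have h := (Real.continuousAt_rpow_const 0 α (Or.inr hα.le)).continuousWithinAt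
    (s := Ioi (0:ℝ))
  simpa [ContinuousWithinAt, Real.zero_rpow hα.ne'] using h

lemma upper_bound (α ε δ : ℝ) (hα : 0 < α) (hε : 0 < ε) (φ φ' : ℝ → ℝ)
    (hderiv : ∀ t ∈ Ioo (0:ℝ) δ, HasDerivAt φ (φ' t) t)
    (hψ : ∀ t ∈ Ioo (0:ℝ) δ, φ' t + α * (φ t / t) ≤ ε)
    (hlim0 : Tendsto φ (𝓝[>] (0:ℝ)) (𝓝 0)) :
    ∀ t ∈ Ioo (0:ℝ) δ, φ t ≤ ε / (α + 1) * t := by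
  set c := ε / (α + 1) with hc
  set F : ℝ → ℝ := fun s => s ^ α * φ s - c * s ^ (α + 1) with hF
  set F' : ℝ → ℝ := fun s => s ^ α * (φ' s + α * (φ s / s) - ε) with hF'
  have hcε : c * (α + 1) = ε := by
    rw [hc, div_mul_cancel₀ _ (by linarith : α + 1 ≠ 0)]
  have hFd : ∀ s ∈ Ioo (0:ℝ) δ, HasDerivAt F (F' s) s := by
    intro s hs
    have hs0 : (0:ℝ) < s := hs.1
    have h1 : HasDerivAt (fun x : ℝ => x ^ α) (α * s ^ (α - 1)) s :=
      Real.hasDerivAt_rpow_const (Or.inl hs0.ne')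
    have h3 : HasDerivAt (fun x : ℝ => x ^ (α + 1)) ((α + 1) * s ^ α) s := by
      have := Real.hasDerivAt_rpow_const (x := s) (p := α + 1) (Or.inl hs0.ne')
      simpa using this
    have h := (h1.mul (hderiv s hs)).sub (h3.const_mul c)
    convert (show HasDerivAt F _ s from h) using 1
    show s ^ α * (φ' s + α * (φ s / s) - ε) = _
    have hsub : s ^ (α - 1) = s ^ α / s := Real.rpow_sub_one hs0.ne' α
    rw [hsub, ← mul_assoc c (α + 1), hcε]
    field_simp
    ring
  have hFneg : ∀ s ∈ Ioo (0:ℝ) δ, F' s ≤ 0 := by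
    intro s hs
    have h1 : (0:ℝ) ≤ s ^ α := Real.rpow_nonneg hs.1.le α
    have h2 : φ' s + α * (φ s / s) - ε ≤ 0 := by linarith [hψ s hs]
    exact mul_nonpos_of_nonneg_of_nonpos h1 h2
  have hFlim : Tendsto F (𝓝[>] (0:ℝ)) (𝓝 0) := by
    have h1 := (rpow_tendsto_zero hα).mul hlim0
    have h2 := (rpow_tendsto_zero (by linarith : (0:ℝ) < α + 1)).const_mul c
    simpa using h1.sub h2
  intro t ht
  have hFt : F t ≤ 0 := by
    have key : ∀ s ∈ Ioo (0:ℝ) t, F t ≤ F s := by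
      intro s hs
      have hsub : Icc s t ⊆ Ioo (0:ℝ) δ := fun x hx =>
        ⟨lt_of_lt_of_le hs.1 hx.1, lt_of_le_of_lt hx.2 ht.2⟩
      obtain ⟨ξ, hξ, hslope⟩ := exists_hasDerivAt_eq_slope F F' hs.2
        (fun x hx => (hFd x (hsub hx)).continuousAt.continuousWithinAt)
        (fun x hx => hFd x (hsub (Ioo_subset_Icc_self hx)))
      have hξ' : F' ξ ≤ 0 := hFneg ξ (hsub (Ioo_subset_Icc_self hξ))
      have hst : (0:ℝ) < t - s := by linarith [hs.2]
      have hq : (F t - F s) / (t - s) ≤ 0 := hslope ▸ hξ'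
      have h2 : F t - F s ≤ 0 := by
        have hm := mul_le_mul_of_nonneg_right hq hst.le
        rwa [div_mul_cancel₀ _ hst.ne', zero_mul] at hm
      linarith
    have hev : ∀ᶠ s in 𝓝[>] (0:ℝ), F t ≤ F s := by
      filter_upwards [Ioo_mem_nhdsGT_of_mem ⟨le_refl (0:ℝ), ht.1⟩] with s hs
      exact key s hs
    exact ge_of_tendsto hFlim hev
  have htα : (0:ℝ) < t ^ α := Real.rpow_pos_of_pos ht.1 α
  have ht1 : t ^ (α + 1) = t ^ α * t := Real.rpow_add_one ht.1.ne' α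
  rw [hF] at hFt
  simp only [ht1] at hFt
  nlinarith [hFt, htα]

lemma right_side (b α : ℝ) (hb : 0 < b) (hα : 0 < α) (φ φ' : ℝ → ℝ)
    (hderiv : ∀ t ∈ Ioo (0:ℝ) b, HasDerivAt φ (φ' t) t)
    (hlim0 : Tendsto φ (𝓝[>] (0:ℝ)) (𝓝 0))
    (hlim1 : Tendsto (fun t => φ' t + α * (φ t / t)) (𝓝[>] (0:ℝ)) (𝓝 0)) :
    Tendsto (fun t => φ t / t) (𝓝[>] (0:ℝ)) (𝓝 0) := by
  rw [NormedAddCommGroup.tendsto_nhds_zero]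
  intro ε hε
  have hev : ∀ᶠ t in 𝓝[>] (0:ℝ), |φ' t + α * (φ t / t)| < ε := by
    have h := hlim1
    rw [NormedAddCommGroup.tendsto_nhds_zero] at h
    simpa using h ε hε
  obtain ⟨u, hu, hsub⟩ := mem_nhdsGT_iff_exists_Ioo_subset.mp hev
  set δ := min u b with hδ
  have hδ0 : (0:ℝ) < δ := lt_min hu hb
  have hδu : Ioo (0:ℝ) δ ⊆ Ioo 0 u := Ioo_subset_Ioo le_rfl (min_le_left u b)
  have hδb : Ioo (0:ℝ) δ ⊆ Ioo 0 b := Ioo_subset_Ioo le_rfl (min_le_right u b)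
  have hψabs : ∀ t ∈ Ioo (0:ℝ) δ, |φ' t + α * (φ t / t)| < ε := fun t ht =>
    hsub (hδu ht)
  have hup : ∀ t ∈ Ioo (0:ℝ) δ, φ t ≤ ε / (α + 1) * t :=
    upper_bound α ε δ hα hε φ φ' (fun t ht => hderiv t (hδb ht))
      (fun t ht => le_of_lt (lt_of_le_of_lt (le_abs_self _) (hψabs t ht))) hlim0
  have hlo : ∀ t ∈ Ioo (0:ℝ) δ, -φ t ≤ ε / (α + 1) * t := by
    refine upper_bound α ε δ hα hε (fun t => -φ t) (fun t => -φ' t)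
      (fun t ht => (hderiv t (hδb ht)).neg) (fun t ht => ?_) (by simpa using hlim0.neg)
    have h2 : -(φ' t + α * (φ t / t)) < ε := by
      have h := abs_lt.mp (hψabs t ht)
      linarith [h.1]
    calc -φ' t + α * (-φ t / t) = -(φ' t + α * (φ t / t)) := by rw [neg_div]; ring
    _ ≤ ε := h2.le
  filter_upwards [Ioo_mem_nhdsGT_of_mem ⟨le_refl (0:ℝ), hδ0⟩] with t ht
  have ht0 : (0:ℝ) < t := ht.1
  have habs : |φ t| ≤ ε / (α + 1) * t := abs_le.mpr ⟨by linarith [hlo t ht], hup t ht⟩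
  have hcε : ε / (α + 1) < ε := div_lt_self hε (by linarith)
  have : |φ t / t| ≤ ε / (α + 1) := by
    rw [abs_div, abs_of_pos ht0, div_le_iff₀ ht0]
    linarith [habs]
  calc ‖φ t / t‖ = |φ t / t| := rfl
  _ ≤ ε / (α + 1) := this
  _ < ε := hcε

/-- If `φ` is `C¹` on a punctured open interval around `0`, `φ(t) → 0` and
`φ'(t) + α·φ(t)/t → 0` as `t → 0`, then `φ(t)/t → 0` and `φ'(t) → 0`; consequently
the extension of `φ` by `0` at `0` is `C¹` on the whole interval with derivative `0` at `0`. -/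
theorem stmt_1 (a b : ℝ) (ha : a < 0) (hb : 0 < b) (α : ℝ) (hα : 0 < α)
    (φ φ' : ℝ → ℝ)
    (hderiv : ∀ t ∈ Ioo a b, t ≠ 0 → HasDerivAt φ (φ' t) t)
    (hcont : ContinuousOn φ' (Ioo a b \ {0}))
    (hlim0 : Tendsto φ (𝓝[≠] (0 : ℝ)) (𝓝 0))
    (hlim1 : Tendsto (fun t => φ' t + α * (φ t / t)) (𝓝[≠] (0 : ℝ)) (𝓝 0)) :
    Tendsto (fun t => φ t / t) (𝓝[≠] (0 : ℝ)) (𝓝 0) ∧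
    Tendsto φ' (𝓝[≠] (0 : ℝ)) (𝓝 0) ∧
    ∃ ψ' : ℝ → ℝ,
      (∀ t ∈ Ioo a b, HasDerivAt (Function.update φ 0 0) (ψ' t) t) ∧
      ContinuousOn ψ' (Ioo a b) ∧ ψ' 0 = 0 := by
  have hle : 𝓝[>] (0:ℝ) ≤ 𝓝[≠] (0:ℝ) :=
    nhdsWithin_mono 0 (fun x hx => ne_of_gt hx)
  have hle' : 𝓝[<] (0:ℝ) ≤ 𝓝[≠] (0:ℝ) :=
    nhdsWithin_mono 0 (fun x hx => ne_of_lt hx)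
  -- right side
  have hright : Tendsto (fun t => φ t / t) (𝓝[>] (0:ℝ)) (𝓝 0) :=
    right_side b α hb hα φ φ'
      (fun t ht => hderiv t ⟨lt_trans ha ht.1, ht.2⟩ (ne_of_gt ht.1))
      (hlim0.mono_left hle) (hlim1.mono_left hle)
  -- left side via reflection
  have hnegmap : Tendsto (fun u : ℝ => -u) (𝓝[>] (0:ℝ)) (𝓝[≠] (0:ℝ)) := by
    have : ContinuousWithinAt (fun u : ℝ => -u) (Ioi 0) 0 :=
      (continuous_neg.continuousAt).continuousWithinAt
    have hmaps : MapsTo (fun u : ℝ => -u) (Ioi 0) {(0:ℝ)}ᶜ := by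
      intro x hx
      simp only [mem_compl_iff, mem_singleton_iff, neg_eq_zero]
      exact (ne_of_gt hx)
    have h := this.tendsto_nhdsWithin hmaps
    simpa using h
  have hleft : Tendsto (fun t => φ t / t) (𝓝[<] (0:ℝ)) (𝓝 0) := by
    have hr : Tendsto (fun u => φ (-u) / u) (𝓝[>] (0:ℝ)) (𝓝 0) := by
      have hd : ∀ u ∈ Ioo (0:ℝ) (-a), HasDerivAt (fun u => φ (-u)) (-φ' (-u)) u := by
        intro u hu
        have h1 : -u ∈ Ioo a b := ⟨by linarith [hu.2], by linarith [hu.1]⟩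
        have h := (hderiv (-u) h1 (by linarith [hu.1] : (-u:ℝ) ≠ 0)).comp u (hasDerivAt_neg u)
        exact (by simpa [mul_comm] using h : HasDerivAt (φ ∘ Neg.neg) (-φ' (-u)) u)
      have hl0 : Tendsto (fun u => φ (-u)) (𝓝[>] (0:ℝ)) (𝓝 0) := hlim0.comp hnegmap
      have hl1 : Tendsto (fun u => -φ' (-u) + α * (φ (-u) / u)) (𝓝[>] (0:ℝ)) (𝓝 0) := by
        have h := (hlim1.comp hnegmap).neg
        rw [neg_zero] at h
        refine h.congr (fun u => ?_)
        simp only [Function.comp]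
        rw [div_neg]
        ring
      exact right_side (-a) α (by linarith) hα (fun u => φ (-u)) (fun u => -φ' (-u)) hd hl0 hl1
    have hnegmap2 : Tendsto (fun t : ℝ => -t) (𝓝[<] (0:ℝ)) (𝓝[>] (0:ℝ)) := by
      have : ContinuousWithinAt (fun u : ℝ => -u) (Iio 0) 0 :=
        (continuous_neg.continuousAt).continuousWithinAt
      have hmaps : MapsTo (fun u : ℝ => -u) (Iio 0) (Ioi (0:ℝ)) := by
        intro x hx
        simpa using neg_pos.mpr (mem_Iio.mp hx)
      have h := this.tendsto_nhdsWithin hmaps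
      simpa using h
    have h := (hr.comp hnegmap2).neg
    rw [neg_zero] at h
    refine h.congr (fun t => ?_)
    simp only [Function.comp, neg_neg]
    rw [div_neg]
    ring
  have part1 : Tendsto (fun t => φ t / t) (𝓝[≠] (0:ℝ)) (𝓝 0) := by
    rw [← nhdsLT_sup_nhdsGT (0:ℝ), tendsto_sup]
    exact ⟨hleft, hright⟩
  have part2 : Tendsto φ' (𝓝[≠] (0:ℝ)) (𝓝 0) := by
    have h := hlim1.sub (part1.const_mul α)
    simp only [mul_zero, sub_zero] at h
    refine h.congr (fun t => ?_)
    ring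
  refine ⟨part1, part2, Function.update φ' 0 0, ?_, ?_, ?_⟩
  · intro t ht
    by_cases h0 : t = 0
    · subst h0
      rw [Function.update_self]
      rw [hasDerivAt_iff_tendsto_slope]
      refine part1.congr' ?_
      filter_upwards [self_mem_nhdsWithin] with s hs
      rw [slope_def_field, Function.update_of_ne hs, Function.update_self]
      simp
    · rw [Function.update_of_ne h0]
      refine (hderiv t ht h0).congr_of_eventuallyEq ?_
      filter_upwards [isOpen_compl_singleton.mem_nhds h0] with s hs
      rw [Function.update_of_ne hs]
  · intro t ht
    by_cases h0 : t = 0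
    · subst h0
      rw [← continuousWithinAt_diff_self]
      unfold ContinuousWithinAt
      rw [Function.update_self]
      have hsub : Ioo a b \ {(0:ℝ)} ⊆ {(0:ℝ)}ᶜ := fun x hx => hx.2
      refine (part2.mono_left (nhdsWithin_mono 0 hsub)).congr' ?_
      filter_upwards [self_mem_nhdsWithin] with s hs
      rw [Function.update_of_ne hs.2]
    · have hopen : IsOpen (Ioo a b \ {(0:ℝ)}) :=
        isOpen_Ioo.sdiff isClosed_singleton
      have hca : ContinuousAt φ' t :=
        hcont.continuousAt (hopen.mem_nhds ⟨ht, h0⟩)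
      have : ContinuousAt (Function.update φ' 0 0) t := by
        refine hca.congr ?_
        filter_upwards [isOpen_compl_singleton.mem_nhds h0] with s hs
        rw [Function.update_of_ne hs]
      exact this.continuousWithinAt
  · exact Function.update_self 0 0 φ'
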